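/- Fix an integer m ≥ 0 and define Q₁ᵐ(y) := Σ_{1 ≤ i ≤ m, i ≡ m (mod 2)} C(m−i, (m−i)/2) · yⁱ / i, and for 0 < x < 1/2 set F(x) := Σ_{k>0, k ≡ m (mod 2)} C(k+m, (k+m)/2) · x^k / k − Q₁ᵐ(1/x) + ε_m · C(m, m/2) · log(1 + √(1 − 4x²)), where ε_m = 1 if m is even and ε_m = 0 if m is odd. Then F is differentiable on (0, 1/2) and F′(x) = 1/(x^{m+1}·√(1 − 4x²)) − ε_m · C(m, m/2) / (x·√(1 − 4x²)) for all x ∈ (0, 1/2). -/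

import Mathlib

open Real Set Finset

private lemma aux_choose_le_two_pow (n k : ℕ) : n.choose k ≤ 2 ^ n := by
  rcases le_or_gt k n with h | h
  · calc n.choose k ≤ ∑ m ∈ Finset.range (n + 1), n.choose m :=
        Finset.single_le_sum (fun i _ => Nat.zero_le _) (Finset.mem_range.2 (Nat.lt_succ_of_le h))
    _ = 2 ^ n := Nat.sum_range_choose n
  · simp [Nat.choose_eq_zero_of_lt h]

private lemma aux_cb_le (n : ℕ) : (Nat.centralBinom n : ℝ) ≤ 4 ^ n := by
  have h := aux_choose_le_two_pow (2 * n) n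
  have h2 : (Nat.centralBinom n : ℝ) ≤ (2 : ℝ) ^ (2 * n) := by
    rw [Nat.centralBinom]; exact_mod_cast h
  calc (Nat.centralBinom n : ℝ) ≤ (2 : ℝ) ^ (2 * n) := h2
    _ = 4 ^ n := by rw [pow_mul]; norm_num

noncomputable def cbF (t : ℝ) : ℝ := ∑' n : ℕ, (Nat.centralBinom n : ℝ) * t ^ n
noncomputable def cbD (t : ℝ) : ℝ := ∑' n : ℕ, (Nat.centralBinom n : ℝ) * ((n : ℝ) * t ^ (n - 1))

private lemma aux_cbf_summable {t : ℝ} (ht : |t| < 1 / 4) :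
    Summable (fun n : ℕ => (Nat.centralBinom n : ℝ) * t ^ n) := by
  apply Summable.of_norm_bounded (g := fun n : ℕ => (4 * |t|) ^ n)
    (summable_geometric_of_lt_one (by positivity) (by linarith [abs_nonneg t]))
  intro n
  simp only [norm_mul, norm_pow, Real.norm_eq_abs, Nat.abs_cast, mul_pow]
  exact mul_le_mul_of_nonneg_right (aux_cb_le n) (pow_nonneg (abs_nonneg t) n)

private lemma aux_cbd_bound {r : ℝ} (hr : 0 < r) (n : ℕ) {y : ℝ} (hy : |y| ≤ r) :
    ‖(Nat.centralBinom n : ℝ) * ((n : ℝ) * y ^ (n - 1))‖ ≤ (1 / r) * ((n : ℝ) * (4 * r) ^ n) := by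
  obtain rfl | hn := Nat.eq_zero_or_pos n
  · simp
  · obtain ⟨j, rfl⟩ : ∃ j, n = j + 1 := ⟨n - 1, by omega⟩
    have h1 : ‖(Nat.centralBinom (j+1) : ℝ) * (((j+1 : ℕ) : ℝ) * y ^ (j + 1 - 1))‖
        = (Nat.centralBinom (j+1) : ℝ) * (((j+1 : ℕ) : ℝ) * |y| ^ j) := by
      simp only [Real.norm_eq_abs, abs_mul, abs_pow, Nat.abs_cast, Nat.add_sub_cancel]
    rw [h1]
    have h3 : (Nat.centralBinom (j+1) : ℝ) * (((j+1 : ℕ) : ℝ) * |y| ^ j)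
        ≤ 4 ^ (j+1) * (((j+1 : ℕ) : ℝ) * r ^ j) := by
      have hp := pow_le_pow_left₀ (abs_nonneg y) hy j
      exact mul_le_mul (aux_cb_le _) (mul_le_mul_of_nonneg_left hp (by positivity))
        (by positivity) (by positivity)
    refine h3.trans (le_of_eq ?_)
    rw [mul_pow]
    field_simp
    ring

private lemma aux_u_summable {r : ℝ} (hr : 0 < r) (hr4 : 4 * r < 1) :
    Summable (fun n : ℕ => (1 / r) * ((n : ℝ) * (4 * r) ^ n)) := by
  apply Summable.mul_left
  have := summable_pow_mul_geometric_of_norm_lt_one (R := ℝ) 1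
    (r := 4 * r) (by rw [Real.norm_eq_abs, abs_of_pos (by linarith)]; linarith)
  simpa using this

private lemma aux_cbd_summable {t : ℝ} (ht : |t| < 1 / 4) :
    Summable (fun n : ℕ => (Nat.centralBinom n : ℝ) * ((n : ℝ) * t ^ (n - 1))) := by
  set r : ℝ := (|t| + 1 / 4) / 2 with hrdef
  have h0 : 0 ≤ |t| := abs_nonneg t
  have hr : 0 < r := by rw [hrdef]; linarith
  have htr : |t| ≤ r := by rw [hrdef]; linarith
  have hr4 : 4 * r < 1 := by rw [hrdef]; linarith
  exact Summable.of_norm_bounded (aux_u_summable hr hr4) (fun n => aux_cbd_bound hr n htr)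

private lemma aux_cbf_hasDerivAt {t : ℝ} (ht : |t| < 1 / 4) : HasDerivAt cbF (cbD t) t := by
  set r : ℝ := (|t| + 1 / 4) / 2 with hrdef
  have h0 : 0 ≤ |t| := abs_nonneg t
  have hr : 0 < r := by rw [hrdef]; linarith
  have htr : |t| < r := by rw [hrdef]; linarith
  have hr4 : 4 * r < 1 := by rw [hrdef]; linarith
  have hmem : t ∈ Set.Ioo (-r) r := by
    obtain ⟨h1, h2⟩ := abs_lt.1 htr; exact ⟨h1, h2⟩
  exact hasDerivAt_tsum_of_isPreconnected
    (u := fun n : ℕ => (1 / r) * ((n : ℝ) * (4 * r) ^ n))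
    (g := fun (n : ℕ) (y : ℝ) => (Nat.centralBinom n : ℝ) * y ^ n)
    (g' := fun (n : ℕ) (y : ℝ) => (Nat.centralBinom n : ℝ) * ((n : ℝ) * y ^ (n - 1)))
    (aux_u_summable hr hr4) isOpen_Ioo
    (convex_Ioo _ _).isPreconnected
    (fun n y _ => (hasDerivAt_pow n y).const_mul _)
    (fun n y hy => aux_cbd_bound hr n (abs_le.2 ⟨hy.1.le, hy.2.le⟩))
    hmem (aux_cbf_summable ht) hmem

private lemma aux_rel {t : ℝ} (ht : |t| < 1 / 4) : (1 - 4 * t) * cbD t = 2 * cbF t := by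
  have H1 : HasSum (fun n : ℕ => (Nat.centralBinom n : ℝ) * t ^ n) (cbF t) :=
    (aux_cbf_summable ht).hasSum
  have H2 : HasSum (fun n : ℕ => (Nat.centralBinom n : ℝ) * ((n : ℝ) * t ^ (n - 1))) (cbD t) :=
    (aux_cbd_summable ht).hasSum
  have H3 : HasSum (fun n : ℕ => (Nat.centralBinom (n + 1) : ℝ) * (((n : ℝ) + 1) * t ^ n))
      (cbD t) := by
    have h := (hasSum_nat_add_iff'
      (f := fun n : ℕ => (Nat.centralBinom n : ℝ) * ((n : ℝ) * t ^ (n - 1))) 1).mpr H2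
    simp only [Finset.range_one, Finset.sum_singleton, Nat.cast_zero, zero_mul, mul_zero,
      sub_zero] at h
    have hfun : (fun n : ℕ => (Nat.centralBinom (n + 1) : ℝ) * (((n + 1 : ℕ) : ℝ) * t ^ (n + 1 - 1)))
        = (fun n : ℕ => (Nat.centralBinom (n + 1) : ℝ) * (((n : ℝ) + 1) * t ^ n)) := by
      funext n; push_cast; simp
    rwa [hfun] at h
  have H4 : HasSum (fun n : ℕ => (Nat.centralBinom n : ℝ) * ((n : ℝ) * t ^ n)) (t * cbD t) := by
    have h := H2.mul_left t
    have hfun : (fun n : ℕ => t * ((Nat.centralBinom n : ℝ) * ((n : ℝ) * t ^ (n - 1))))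
        = (fun n : ℕ => (Nat.centralBinom n : ℝ) * ((n : ℝ) * t ^ n)) := by
      funext n
      rcases n with _ | j
      · simp
      · simp only [Nat.add_sub_cancel, Nat.cast_add, Nat.cast_one]
        rw [pow_succ]; ring
    rwa [hfun] at h
  have H5 : HasSum (fun n : ℕ => 4 * ((Nat.centralBinom n : ℝ) * ((n : ℝ) * t ^ n))
      + 2 * ((Nat.centralBinom n : ℝ) * t ^ n)) (4 * (t * cbD t) + 2 * cbF t) :=
    (H4.mul_left 4).add (H1.mul_left 2)
  have hrec : (fun n : ℕ => (Nat.centralBinom (n + 1) : ℝ) * (((n : ℝ) + 1) * t ^ n))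
      = (fun n : ℕ => 4 * ((Nat.centralBinom n : ℝ) * ((n : ℝ) * t ^ n))
      + 2 * ((Nat.centralBinom n : ℝ) * t ^ n)) := by
    funext n
    have h := Nat.succ_mul_centralBinom_succ n
    have h' : ((n : ℝ) + 1) * (Nat.centralBinom (n + 1) : ℝ)
        = 2 * (2 * (n : ℝ) + 1) * (Nat.centralBinom n : ℝ) := by exact_mod_cast h
    linear_combination t ^ n * h'
  have key : cbD t = 4 * (t * cbD t) + 2 * cbF t := HasSum.unique (hrec ▸ H3) H5
  linear_combination key

private lemma aux_cbf_zero : cbF 0 = 1 := by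
  rw [cbF, tsum_eq_single 0 (fun n hn => by simp [zero_pow hn])]
  simp [Nat.centralBinom]

private lemma aux_cbf_eq {t : ℝ} (h0 : 0 ≤ t) (h4 : t < 1 / 4) :
    cbF t = 1 / Real.sqrt (1 - 4 * t) := by
  rcases eq_or_lt_of_le h0 with rfl | hpos
  · simp [aux_cbf_zero]
  · have habs : ∀ u ∈ Set.Icc (0 : ℝ) t, |u| < 1 / 4 := fun u hu =>
      abs_lt.2 ⟨by linarith [hu.1], by linarith [hu.2]⟩
    have hsq : ∀ u : ℝ, |u| < 1 / 4 →
        HasDerivAt (fun z => cbF z ^ 2 * (1 - 4 * z))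
          (2 * cbF u * cbD u * (1 - 4 * u) + cbF u ^ 2 * (-4)) u := by
      intro u hau
      have hd := aux_cbf_hasDerivAt hau
      have h1 : HasDerivAt (fun z => cbF z ^ 2) (2 * cbF u * cbD u) u := by
        have h := hd.pow 2
        norm_num at h
        exact h
      have h2 : HasDerivAt (fun z : ℝ => 1 - 4 * z) (-4) u := by
        have h := ((hasDerivAt_id u).const_mul (4 : ℝ)).const_sub 1
        norm_num at h
        exact h
      exact h1.mul h2
    have hderiv : ∀ u ∈ Set.Ioo (0 : ℝ) t,
        HasDerivAt (fun z => cbF z ^ 2 * (1 - 4 * z)) 0 u := by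
      intro u hu
      have hau : |u| < 1 / 4 := habs u ⟨hu.1.le, hu.2.le⟩
      have h3 := hsq u hau
      convert h3 using 1
      have hr := aux_rel hau
      linear_combination -2 * cbF u * hr
    have hcont : ContinuousOn (fun z => cbF z ^ 2 * (1 - 4 * z)) (Set.Icc 0 t) :=
      fun u hu => ((hsq u (habs u hu)).continuousAt).continuousWithinAt
    obtain ⟨c, -, hc⟩ := exists_hasDerivAt_eq_slope (fun z => cbF z ^ 2 * (1 - 4 * z))
      (fun _ => 0) hpos hcont hderiv
    have hkey : cbF t ^ 2 * (1 - 4 * t) = 1 := by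
      have h' := hc.symm
      rw [div_eq_zero_iff] at h'
      rcases h' with h' | h'
      · have : cbF t ^ 2 * (1 - 4 * t) = cbF 0 ^ 2 * (1 - 4 * 0) := by linarith
        rw [this, aux_cbf_zero]; norm_num
      · exfalso; rw [sub_zero] at h'; exact hpos.ne' h'
    have h1t : 0 < 1 - 4 * t := by linarith
    have hs : 0 < Real.sqrt (1 - 4 * t) := Real.sqrt_pos.2 h1t
    have hnn : 0 ≤ cbF t := tsum_nonneg (fun n => by positivity)
    have hsq1 : (cbF t * Real.sqrt (1 - 4 * t)) ^ 2 = 1 := by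
      rw [mul_pow, Real.sq_sqrt h1t.le]; exact hkey
    have hone : cbF t * Real.sqrt (1 - 4 * t) = 1 := by
      have h2 : (cbF t * Real.sqrt (1 - 4 * t) - 1) * (cbF t * Real.sqrt (1 - 4 * t) + 1) = 0 := by
        linear_combination hsq1
      rcases mul_eq_zero.1 h2 with h | h
      · linarith
      · exfalso; nlinarith [mul_nonneg hnn hs.le]
    rw [eq_div_iff hs.ne']; exact hone

private lemma aux_hasSum_central {t : ℝ} (h0 : 0 ≤ t) (h4 : t < 1 / 4) :
    HasSum (fun n : ℕ => (Nat.centralBinom n : ℝ) * t ^ n) (1 / Real.sqrt (1 - 4 * t)) := by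
  rw [← aux_cbf_eq h0 h4]
  exact (aux_cbf_summable (by rwa [abs_of_nonneg h0])).hasSum

private lemma aux_reindex (m : ℕ) (G : ℕ → ℝ) :
    (∑ i ∈ Finset.Icc 1 m, if i % 2 = m % 2 then G i else 0)
      = ∑ n ∈ Finset.range ((m + 1) / 2), G (m - 2 * n) := by
  rw [← Finset.sum_filter]
  refine Finset.sum_nbij' (fun i => (m - i) / 2) (fun n => m - 2 * n) ?_ ?_ ?_ ?_ ?_
  · intro a ha
    simp only [Finset.mem_filter, Finset.mem_Icc] at ha
    simp only [Finset.mem_range]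
    omega
  · intro a ha
    simp only [Finset.mem_range] at ha
    simp only [Finset.mem_filter, Finset.mem_Icc]
    omega
  · intro a ha
    simp only [Finset.mem_filter, Finset.mem_Icc] at ha
    show m - 2 * ((m - a) / 2) = a
    omega
  · intro a ha
    simp only [Finset.mem_range] at ha
    show (m - (m - 2 * a)) / 2 = a
    omega
  · intro a ha
    simp only [Finset.mem_filter, Finset.mem_Icc] at ha
    have h : m - 2 * ((m - a) / 2) = a := by omega
    show G a = G (m - 2 * ((m - a) / 2))
    rw [h]

set_option maxHeartbeats 1600000 in
/-- Fix `m ≥ 0`, let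
`Q₁ᵐ(y) = Σ_{1 ≤ i ≤ m, i ≡ m (2)} C(m−i,(m−i)/2)·yⁱ/i` and, for `0 < x < 1/2`,
`F(x) = Σ_{k>0, k ≡ m (2)} C(k+m,(k+m)/2)·x^k/k − Q₁ᵐ(1/x)
          + ε_m·C(m,m/2)·log(1+√(1−4x²))`.
Then `F` is differentiable on `(0,1/2)` with
`F′(x) = 1/(x^{m+1}√(1−4x²)) − ε_m·C(m,m/2)/(x√(1−4x²))`. -/
theorem derivative_of_combinatorial_series (m : ℕ) :
    ∀ x ∈ Set.Ioo (0 : ℝ) (1 / 2),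
      HasDerivAt
        (fun y : ℝ =>
          (∑' k : ℕ,
              if k % 2 = m % 2 ∧ 0 < k then
                (((k + m).choose ((k + m) / 2) : ℕ) : ℝ) * y ^ k / k else 0)
          - (∑ i ∈ Finset.Icc 1 m,
              if i % 2 = m % 2 then
                (((m - i).choose ((m - i) / 2) : ℕ) : ℝ) * (1 / y) ^ i / i else 0)
          + (if Even m then ((m.choose (m / 2) : ℕ) : ℝ) else 0) *
              Real.log (1 + Real.sqrt (1 - 4 * y ^ 2)))
        (1 / (x ^ (m + 1) * Real.sqrt (1 - 4 * x ^ 2))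
          - (if Even m then ((m.choose (m / 2) : ℕ) : ℝ) else 0) /
              (x * Real.sqrt (1 - 4 * x ^ 2)))
        x := by
  intro x hx
  obtain ⟨hx0, hx2⟩ := hx
  set E : ℝ := (if Even m then ((m.choose (m / 2) : ℕ) : ℝ) else 0) with hEdef
  have hxne : x ≠ 0 := ne_of_gt hx0
  have h4x : 0 < 1 - 4 * x ^ 2 := by nlinarith
  have hs0 : 0 < Real.sqrt (1 - 4 * x ^ 2) := Real.sqrt_pos.2 h4x
  have hs2 : Real.sqrt (1 - 4 * x ^ 2) ^ 2 = 1 - 4 * x ^ 2 := Real.sq_sqrt h4x.le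
  set s : ℝ := Real.sqrt (1 - 4 * x ^ 2) with hsdef
  -- parameters
  set r : ℝ := (2 * x + 1) / 4 with hrdef
  have hr0 : 0 < r := by rw [hrdef]; linarith
  have hxr : x < r := by rw [hrdef]; linarith
  have hr2 : 2 * r < 1 := by rw [hrdef]; linarith
  have hxmem : x ∈ Set.Ioo (-r) r := ⟨by linarith, hxr⟩
  -- Part A : derivative of the series
  have hu : Summable (fun k : ℕ => ((2:ℝ) ^ m / r) * (2 * r) ^ k) :=
    (summable_geometric_of_lt_one (by positivity) hr2).mul_left _
  have hder : ∀ (k : ℕ) (y : ℝ), HasDerivAt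
      (fun z : ℝ => if k % 2 = m % 2 ∧ 0 < k then
        (((k + m).choose ((k + m) / 2) : ℕ) : ℝ) * z ^ k / k else 0)
      (if k % 2 = m % 2 ∧ 0 < k then
        (((k + m).choose ((k + m) / 2) : ℕ) : ℝ) * y ^ (k - 1) else 0) y := by
    intro k y
    split_ifs with h
    · have hk : 0 < k := h.2
      have hkR : (k : ℝ) ≠ 0 := Nat.cast_ne_zero.2 hk.ne'
      have h1 := (hasDerivAt_pow k y).const_mul
        ((((k + m).choose ((k + m) / 2) : ℕ) : ℝ) / k)
      have hfun : (fun z : ℝ => (((k + m).choose ((k + m) / 2) : ℕ) : ℝ) / k * z ^ k)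
          = (fun z : ℝ => (((k + m).choose ((k + m) / 2) : ℕ) : ℝ) * z ^ k / k) := by
        funext z; ring
      rw [hfun] at h1
      refine h1.congr_deriv ?_
      have hkk : (k : ℝ) * (k : ℝ)⁻¹ = 1 := mul_inv_cancel₀ hkR
      rw [div_eq_mul_inv]
      linear_combination ((((k + m).choose ((k + m) / 2) : ℕ) : ℝ) * y ^ (k - 1)) * hkk
    · exact hasDerivAt_const y 0
  have hbound : ∀ (k : ℕ), ∀ y ∈ Set.Ioo (-r) r,
      ‖if k % 2 = m % 2 ∧ 0 < k then
        (((k + m).choose ((k + m) / 2) : ℕ) : ℝ) * y ^ (k - 1) else 0‖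
      ≤ ((2:ℝ) ^ m / r) * (2 * r) ^ k := by
    intro k y hy
    have hyr : |y| ≤ r := by
      rw [abs_le]; exact ⟨hy.1.le, hy.2.le⟩
    split_ifs with h
    · have hk : 0 < k := h.2
      obtain ⟨j, rfl⟩ : ∃ j, k = j + 1 := ⟨k - 1, by omega⟩
      have hC : (((j + 1 + m).choose ((j + 1 + m) / 2) : ℕ) : ℝ) ≤ 2 ^ (j + 1 + m) := by
        have := aux_choose_le_two_pow (j + 1 + m) ((j + 1 + m) / 2)
        calc (((j + 1 + m).choose ((j + 1 + m) / 2) : ℕ) : ℝ) ≤ ((2 ^ (j + 1 + m) : ℕ) : ℝ) := by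
              exact_mod_cast this
          _ = 2 ^ (j + 1 + m) := by push_cast; ring
      have h1 : ‖(((j + 1 + m).choose ((j + 1 + m) / 2) : ℕ) : ℝ) * y ^ (j + 1 - 1)‖
          = (((j + 1 + m).choose ((j + 1 + m) / 2) : ℕ) : ℝ) * |y| ^ j := by
        simp only [Real.norm_eq_abs, abs_mul, abs_pow, Nat.abs_cast, Nat.add_sub_cancel]
      rw [h1]
      have h2 : (((j + 1 + m).choose ((j + 1 + m) / 2) : ℕ) : ℝ) * |y| ^ j
          ≤ 2 ^ (j + 1 + m) * r ^ j := by
        have hp := pow_le_pow_left₀ (abs_nonneg y) hyr j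
        exact mul_le_mul hC hp (by positivity) (by positivity)
      refine h2.trans (le_of_eq ?_)
      rw [mul_pow, pow_add, pow_add, pow_succ]
      field_simp
      ring
    · simp only [norm_zero]
      positivity
  have hsum0 : Summable (fun k : ℕ => if k % 2 = m % 2 ∧ 0 < k then
      (((k + m).choose ((k + m) / 2) : ℕ) : ℝ) * x ^ k / k else 0) := by
    apply Summable.of_norm_bounded (g := fun k : ℕ => r * (((2:ℝ) ^ m / r) * (2 * r) ^ k))
      (hu.mul_left r)
    intro k
    have hb := hbound k x hxmem
    split_ifs with h
    · have hk : 0 < k := h.2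
      have hCpos : (0:ℝ) ≤ (((k + m).choose ((k + m) / 2) : ℕ) : ℝ) := Nat.cast_nonneg _
      have hxk : (0:ℝ) < x ^ (k - 1) := pow_pos hx0 _
      rw [if_pos h] at hb
      have hb' : (((k + m).choose ((k + m) / 2) : ℕ) : ℝ) * x ^ (k - 1)
          ≤ ((2:ℝ) ^ m / r) * (2 * r) ^ k := by
        rwa [Real.norm_eq_abs, abs_of_nonneg (by positivity)] at hb
      have hxx : x ^ k = x ^ (k - 1) * x := by
        rw [← pow_succ]; congr 1; omega
      have hnorm : ‖(((k + m).choose ((k + m) / 2) : ℕ) : ℝ) * x ^ k / k‖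
          = (((k + m).choose ((k + m) / 2) : ℕ) : ℝ) * x ^ k / k := by
        rw [Real.norm_eq_abs, abs_of_nonneg (by positivity)]
      rw [hnorm]
      have hk1 : (1:ℝ) ≤ k := by exact_mod_cast hk
      calc (((k + m).choose ((k + m) / 2) : ℕ) : ℝ) * x ^ k / k
          ≤ (((k + m).choose ((k + m) / 2) : ℕ) : ℝ) * x ^ k := by
            apply div_le_self (by positivity) hk1
        _ = ((((k + m).choose ((k + m) / 2) : ℕ) : ℝ) * x ^ (k - 1)) * x := by
            rw [hxx]; ring
        _ ≤ (((2:ℝ) ^ m / r) * (2 * r) ^ k) * r := by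
            apply mul_le_mul hb' hxr.le hx0.le (by positivity)
        _ = r * (((2:ℝ) ^ m / r) * (2 * r) ^ k) := by ring
    · simp only [norm_zero]
      positivity
  have hA : HasDerivAt
      (fun z : ℝ => ∑' k : ℕ, if k % 2 = m % 2 ∧ 0 < k then
        (((k + m).choose ((k + m) / 2) : ℕ) : ℝ) * z ^ k / k else 0)
      (∑' k : ℕ, if k % 2 = m % 2 ∧ 0 < k then
        (((k + m).choose ((k + m) / 2) : ℕ) : ℝ) * x ^ (k - 1) else 0) x :=
    hasDerivAt_tsum_of_isPreconnected hu isOpen_Ioo (convex_Ioo _ _).isPreconnected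
      (fun k y _ => hder k y) hbound hxmem hsum0 hxmem
  -- Part B : value of the derivative series
  obtain ⟨q, hqdef⟩ : ∃ q, m / 2 = q := ⟨m / 2, rfl⟩
  have hx2lt : x ^ 2 < 1 / 4 := by nlinarith
  have HS : HasSum (fun n : ℕ => (Nat.centralBinom n : ℝ) * (x ^ 2) ^ n) (1 / s) := by
    rw [hsdef]
    exact aux_hasSum_central (sq_nonneg x) hx2lt
  have HS1 : HasSum (fun n : ℕ => (Nat.centralBinom n : ℝ) * x ^ (2 * n)) (1 / s) := by
    have hfun : (fun n : ℕ => (Nat.centralBinom n : ℝ) * (x ^ 2) ^ n)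
        = (fun n : ℕ => (Nat.centralBinom n : ℝ) * x ^ (2 * n)) := by
      funext n; rw [pow_mul]
    rwa [hfun] at HS
  have HS2 : HasSum (fun n : ℕ => (Nat.centralBinom (n + (q + 1)) : ℝ) * x ^ (2 * (n + (q + 1))))
      (1 / s - ∑ i ∈ Finset.range (q + 1), (Nat.centralBinom i : ℝ) * x ^ (2 * i)) :=
    (hasSum_nat_add_iff' (q + 1)).mpr HS1
  have HS3 := HS2.mul_right (x ^ (m + 1))⁻¹
  have hxm1 : (x : ℝ) ^ (m + 1) ≠ 0 := pow_ne_zero _ hxne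
  have hcomp : ∀ n : ℕ,
      (if (2 * n + 2 - m % 2) % 2 = m % 2 ∧ 0 < 2 * n + 2 - m % 2 then
        (((2 * n + 2 - m % 2 + m).choose ((2 * n + 2 - m % 2 + m) / 2) : ℕ) : ℝ)
          * x ^ (2 * n + 2 - m % 2 - 1) else 0)
      = (Nat.centralBinom (n + (q + 1)) : ℝ) * x ^ (2 * (n + (q + 1))) * (x ^ (m + 1))⁻¹ := by
    intro n
    have hcond : (2 * n + 2 - m % 2) % 2 = m % 2 ∧ 0 < 2 * n + 2 - m % 2 := by omega
    rw [if_pos hcond]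
    have h1 : 2 * n + 2 - m % 2 + m = 2 * (n + (q + 1)) := by omega
    have h2 : (2 * (n + (q + 1))) / 2 = n + (q + 1) := by omega
    have hchoose : ((2 * n + 2 - m % 2 + m).choose ((2 * n + 2 - m % 2 + m) / 2) : ℕ)
        = Nat.centralBinom (n + (q + 1)) := by
      rw [h1, h2, Nat.centralBinom]
    rw [hchoose]
    have he : 2 * (n + (q + 1)) = (2 * n + 2 - m % 2 - 1) + (m + 1) := by omega
    rw [he, pow_add, mul_assoc, mul_assoc, mul_inv_cancel₀ hxm1, mul_one]
  have hinj : Function.Injective (fun n : ℕ => 2 * n + 2 - m % 2) := by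
    intro a b h
    simp only at h
    omega
  have HS4 : HasSum (fun k : ℕ => if k % 2 = m % 2 ∧ 0 < k then
      (((k + m).choose ((k + m) / 2) : ℕ) : ℝ) * x ^ (k - 1) else 0)
      ((1 / s - ∑ i ∈ Finset.range (q + 1), (Nat.centralBinom i : ℝ) * x ^ (2 * i))
        * (x ^ (m + 1))⁻¹) := by
    refine (Function.Injective.hasSum_iff hinj ?_).mp ?_
    · intro k hk
      rw [if_neg]
      intro hcond
      refine hk ⟨(k - 2 + m % 2) / 2, ?_⟩
      obtain ⟨h1, h2⟩ := hcond
      show 2 * ((k - 2 + m % 2) / 2) + 2 - m % 2 = k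
      omega
    · have hfun : ((fun k : ℕ => if k % 2 = m % 2 ∧ 0 < k then
          (((k + m).choose ((k + m) / 2) : ℕ) : ℝ) * x ^ (k - 1) else 0)
          ∘ (fun n : ℕ => 2 * n + 2 - m % 2))
          = fun n : ℕ => (Nat.centralBinom (n + (q + 1)) : ℝ) * x ^ (2 * (n + (q + 1)))
            * (x ^ (m + 1))⁻¹ := by
        funext n
        exact hcomp n
      rw [hfun]
      exact HS3
  -- Part C : derivative of the finite sum
  have hB : HasDerivAt
      (fun z : ℝ => ∑ i ∈ Finset.Icc 1 m, if i % 2 = m % 2 then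
        (((m - i).choose ((m - i) / 2) : ℕ) : ℝ) * (1 / z) ^ i / i else 0)
      (∑ i ∈ Finset.Icc 1 m, (if i % 2 = m % 2 then
        -((((m - i).choose ((m - i) / 2) : ℕ) : ℝ) * x ^ (m - i)) else 0) / x ^ (m + 1)) x := by
    apply HasDerivAt.fun_sum
    intro i hi
    rw [Finset.mem_Icc] at hi
    obtain ⟨hi1, him⟩ := hi
    split_ifs with hcond
    · have hiR : (i : ℝ) ≠ 0 := Nat.cast_ne_zero.2 (by omega)
      have base := (((hasDerivAt_inv hxne).fun_pow i).const_mul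
        (((m - i).choose ((m - i) / 2) : ℕ) : ℝ)).div_const (i : ℝ)
      have hfun : (fun z : ℝ => (((m - i).choose ((m - i) / 2) : ℕ) : ℝ) * (z⁻¹) ^ i / i)
          = (fun z : ℝ => (((m - i).choose ((m - i) / 2) : ℕ) : ℝ) * (1 / z) ^ i / i) := by
        funext z; rw [one_div]
      rw [hfun] at base
      refine base.congr_deriv ?_
      symm
      rw [inv_pow]
      rw [show m + 1 = (m - i) + ((i - 1) + 2) from by omega, pow_add, pow_add]
      have hxi1 : x ^ (i - 1) ≠ 0 := pow_ne_zero _ hxne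
      field_simp
    · rw [zero_div]
      exact hasDerivAt_const x (0:ℝ)
  -- Part D : derivative of the log term
  have hpow2 : HasDerivAt (fun z : ℝ => 1 - 4 * z ^ 2) (-(8 * x)) x := by
    have h := ((hasDerivAt_pow 2 x).const_mul (4 : ℝ)).const_sub 1
    norm_num at h
    refine h.congr_deriv ?_
    ring
  have hsqrt := hpow2.sqrt (ne_of_gt h4x)
  have h1s : (0:ℝ) < 1 + s := by positivity
  have hlog := (hsqrt.const_add 1).log (by positivity)
  have hC := hlog.const_mul E
  rw [← hsdef] at hC
  -- assemble
  have htotal := (hA.sub hB).add hC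
  refine htotal.congr_deriv ?_
  symm
  rw [HS4.tsum_eq]
  -- head identity
  have hhead : (∑ i ∈ Finset.range (q + 1), (Nat.centralBinom i : ℝ) * x ^ (2 * i))
      = (∑ n ∈ Finset.range ((m + 1) / 2), (Nat.centralBinom n : ℝ) * x ^ (2 * n))
        + E * x ^ m := by
    by_cases hm : Even m
    · have hm2 : m % 2 = 0 := Nat.even_iff.mp hm
      rw [hEdef, if_pos hm]
      have hq1 : (m + 1) / 2 = q := by omega
      have h2q : 2 * q = m := by omega
      rw [hq1, Finset.sum_range_succ, h2q]
      have hcb : (Nat.centralBinom q : ℝ) = ((m.choose (m / 2) : ℕ) : ℝ) := by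
        rw [Nat.centralBinom, h2q, hqdef]
      rw [hcb]
    · have hm2 : m % 2 = 1 := Nat.odd_iff.mp (Nat.not_even_iff_odd.mp hm)
      rw [hEdef, if_neg hm]
      have hq1 : (m + 1) / 2 = q + 1 := by omega
      rw [hq1, zero_mul, add_zero]
  -- finite sum identity
  have hDsum : (∑ i ∈ Finset.Icc 1 m, (if i % 2 = m % 2 then
      -((((m - i).choose ((m - i) / 2) : ℕ) : ℝ) * x ^ (m - i)) else 0) / x ^ (m + 1))
      = -(∑ n ∈ Finset.range ((m + 1) / 2), (Nat.centralBinom n : ℝ) * x ^ (2 * n))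
        / x ^ (m + 1) := by
    rw [← Finset.sum_div]
    congr 1
    have h1 : (∑ i ∈ Finset.Icc 1 m, if i % 2 = m % 2 then
        -((((m - i).choose ((m - i) / 2) : ℕ) : ℝ) * x ^ (m - i)) else 0)
        = -(∑ i ∈ Finset.Icc 1 m, if i % 2 = m % 2 then
          (((m - i).choose ((m - i) / 2) : ℕ) : ℝ) * x ^ (m - i) else 0) := by
      rw [← Finset.sum_neg_distrib]
      apply Finset.sum_congr rfl
      intro i _
      split_ifs
      · rfl
      · rw [neg_zero]
    rw [h1, aux_reindex m (fun i => (((m - i).choose ((m - i) / 2) : ℕ) : ℝ) * x ^ (m - i))]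
    congr 1
    apply Finset.sum_congr rfl
    intro n hn
    rw [Finset.mem_range] at hn
    have hmn : m - (m - 2 * n) = 2 * n := by omega
    have hdiv : (2 * n) / 2 = n := by omega
    rw [hmn, hdiv, Nat.centralBinom]
  rw [hDsum, hhead]
  -- final algebra
  have hlogval : -(8 * x) / (2 * s) / (1 + s) = 1 / x - 1 / (x * s) := by
    rw [div_div, div_sub_div _ _ hxne (by positivity : x * s ≠ 0),
      div_eq_div_iff (by positivity) (by positivity)]
    linear_combination (-2 * x * s) * hs2
  rw [hlogval]
  rw [pow_succ]
  have hxm : (x : ℝ) ^ m ≠ 0 := pow_ne_zero _ hxne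
  field_simp
  ring
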